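/- (Prediction-step bound for Algorithm 1, active case) Suppose ‖∇_x f(x_k,t_k)‖ ≥ ε and let x⁻_{k+1} = x_k − δ·(|∇_t f(x_k,t_k)|/‖∇_x f(x_k,t_k)‖²)·∇_x f(x_k,t_k). Then |f(x⁻_{k+1}, t_k + δ) − f(x_k, t_k)| ≤ γ·δ², where γ = 2K1/δ + (M/(2ε²))K1² + K3/2 + K1K2/ε. -/

import Mathlib

open RealInnerProductSpace

/-- prediction-step bound for Algorithm 1, active case: if
`‖∇_x f(x_k,t_k)‖ ≥ ε` and
`x⁻ = x_k − δ(|∇_t f(x_k,t_k)|/‖∇_x f(x_k,t_k)‖²)∇_x f(x_k,t_k)`, then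
`|f(x⁻, t_k + δ) − f(x_k, t_k)| ≤ γ·δ²` with
`γ = 2K1/δ + (M/(2ε²))K1² + K3/2 + K1K2/ε`. -/
lemma mv_bound {V : Type*} [NormedAddCommGroup V] [NormedSpace ℝ V]
    (F : ℝ → V) (F' : ℝ → V) (C tk δ : ℝ) (htk : 0 ≤ tk) (hδ : 0 ≤ δ)
    (hF : ∀ t, 0 ≤ t → HasDerivAt F (F' t) t) (hC : ∀ t, 0 ≤ t → ‖F' t‖ ≤ C) :
    ‖F (tk + δ) - F tk‖ ≤ C * δ := by
  have h := Convex.norm_image_sub_le_of_norm_hasDerivWithin_le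
    (f := F) (f' := F') (s := Set.Icc tk (tk + δ)) (C := C)
    (fun t ht => (hF t (le_trans htk ht.1)).hasDerivWithinAt)
    (fun t ht => hC t (le_trans htk ht.1))
    (convex_Icc _ _) (Set.left_mem_Icc.2 (by linarith))
    (Set.right_mem_Icc.2 (by linarith))
  simpa [abs_of_nonneg hδ] using h

lemma descent_lemma {E : Type*} [NormedAddCommGroup E] [InnerProductSpace ℝ E] [CompleteSpace E]
    (φ : E → ℝ) (g : E → E) (M : ℝ) (hM : 0 ≤ M)
    (hg : ∀ x, HasGradientAt φ (g x) x)
    (hLip : ∀ x y, ‖g x - g y‖ ≤ M * ‖x - y‖) (x y : E) :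
    |φ y - φ x - ⟪g x, y - x⟫| ≤ M / 2 * ‖y - x‖ ^ 2 := by
  set v := y - x with hv
  set G : ℝ → ℝ := fun s => ⟪g (x + s • v) - g x, v⟫ with hG
  have hline : ∀ s : ℝ, HasDerivAt (fun s : ℝ => x + s • v) v s := by
    intro s
    simpa using ((hasDerivAt_id s).smul_const v).const_add x
  have hderiv : ∀ s : ℝ, HasDerivAt (fun s => φ (x + s • v) - s * ⟪g x, v⟫) (G s) s := by
    intro s
    have h1 : HasDerivAt (fun s : ℝ => φ (x + s • v)) ⟪g (x + s • v), v⟫ s := by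
      have := ((hg (x + s • v)).hasFDerivAt).comp_hasDerivAt s (hline s)
      exact this
    have h2 : HasDerivAt (fun s : ℝ => s * ⟪g x, v⟫) ⟪g x, v⟫ s :=
      hasDerivAt_mul_const _
    have h3 := h1.sub h2
    simp only [hG, inner_sub_left]
    exact h3
  have hgcont : Continuous fun s : ℝ => g (x + s • v) := by
    have : LipschitzWith (Real.toNNReal (M * ‖v‖)) (fun s : ℝ => g (x + s • v)) := by
      apply LipschitzWith.of_dist_le_mul
      intro s t
      simp only [dist_eq_norm]
      calc ‖g (x + s • v) - g (x + t • v)‖ ≤ M * ‖(x + s • v) - (x + t • v)‖ :=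
            hLip _ _
        _ = M * ‖v‖ * ‖s - t‖ := by
            rw [show (x + s • v) - (x + t • v) = (s - t) • v by module,
              norm_smul]; ring
        _ ≤ (Real.toNNReal (M * ‖v‖) : ℝ) * ‖s - t‖ := by
            gcongr; exact Real.le_coe_toNNReal _
    exact this.continuous
  have hGcont : Continuous G := by
    apply Continuous.inner
    · exact hgcont.sub continuous_const
    · exact continuous_const
  have hint : IntervalIntegrable G MeasureTheory.volume 0 1 :=
    hGcont.intervalIntegrable 0 1
  have heq : ∫ s in (0:ℝ)..1, G s = φ y - φ x - ⟪g x, v⟫ := by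
    have h := intervalIntegral.integral_eq_sub_of_hasDerivAt
      (f := fun s => φ (x + s • v) - s * ⟪g x, v⟫) (f' := G)
      (fun s _ => hderiv s) hint
    simp only [one_smul, zero_smul, add_zero, one_mul, zero_mul, sub_zero, hv,
      add_sub_cancel] at h
    rw [hv]
    linarith
  have hbound : |∫ s in (0:ℝ)..1, G s| ≤ M / 2 * ‖v‖ ^ 2 := by
    have hb : ∀ s ∈ Set.Ioc (0:ℝ) 1, ‖G s‖ ≤ M * ‖v‖ ^ 2 * s := by
      intro s hs
      have h1 : |G s| ≤ ‖g (x + s • v) - g x‖ * ‖v‖ := abs_real_inner_le_norm _ _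
      have h2 : ‖g (x + s • v) - g x‖ ≤ M * (s * ‖v‖) := by
        have := hLip (x + s • v) x
        simpa [norm_smul, abs_of_nonneg hs.1.le] using this
      calc ‖G s‖ ≤ ‖g (x + s • v) - g x‖ * ‖v‖ := h1
        _ ≤ M * (s * ‖v‖) * ‖v‖ := by
            have := norm_nonneg v; gcongr
        _ = M * ‖v‖ ^ 2 * s := by ring
    have hae : ∀ᵐ t ∂(MeasureTheory.volume.restrict (Set.uIoc (0:ℝ) 1)),
        ‖G t‖ ≤ M * ‖v‖ ^ 2 * t := by
      apply MeasureTheory.ae_restrict_of_forall_mem measurableSet_uIoc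
      intro t ht
      rw [Set.uIoc_of_le (by norm_num : (0:ℝ) ≤ 1)] at ht
      exact hb t ht
    have h := intervalIntegral.norm_integral_le_abs_of_norm_le hae
      ((continuous_const.mul continuous_id).intervalIntegrable 0 1)
    have hval : ∫ t in (0:ℝ)..1, M * ‖v‖ ^ 2 * t = M * ‖v‖ ^ 2 / 2 := by
      rw [intervalIntegral.integral_const_mul, integral_id]
      ring
    rw [hval] at h
    calc |∫ s in (0:ℝ)..1, G s| ≤ |M * ‖v‖ ^ 2 / 2| := h
      _ = M / 2 * ‖v‖ ^ 2 := by
          rw [abs_of_nonneg (by positivity)]; ring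
  rw [heq] at hbound
  exact hbound

theorem prediction_step_bound_active
    {E : Type*} [NormedAddCommGroup E] [InnerProductSpace ℝ E] [CompleteSpace E]
    (f : E → ℝ → ℝ) (gx : E → ℝ → E) (ft : E → ℝ → ℝ)
    (fxt : E → ℝ → E) (ftt : E → ℝ → ℝ)
    (m M K1 K2 K3 : ℝ) (hm : 0 < m) (hmM : m ≤ M)
    (hgrad : ∀ (x : E) (t : ℝ), 0 ≤ t → HasGradientAt (fun y => f y t) (gx x t) x)
    (hft : ∀ (x : E) (t : ℝ), 0 ≤ t → HasDerivAt (fun s => f x s) (ft x t) t)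
    (hfxt : ∀ (x : E) (t : ℝ), 0 ≤ t → HasDerivAt (fun s => gx x s) (fxt x t) t)
    (hftt : ∀ (x : E) (t : ℝ), 0 ≤ t → HasDerivAt (fun s => ft x s) (ftt x t) t)
    (hsc : ∀ (t : ℝ), 0 ≤ t → ∀ x y : E, m * ‖x - y‖ ^ 2 ≤ ⟪gx x t - gx y t, x - y⟫)
    (hLip : ∀ (t : ℝ), 0 ≤ t → ∀ x y : E, ‖gx x t - gx y t‖ ≤ M * ‖x - y‖)
    (hK1 : ∀ (x : E) (t : ℝ), 0 ≤ t → |ft x t| ≤ K1)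
    (hK2 : ∀ (x : E) (t : ℝ), 0 ≤ t → ‖fxt x t‖ ≤ K2)
    (hK3 : ∀ (x : E) (t : ℝ), 0 ≤ t → |ftt x t| ≤ K3)
    (xk : E) (tk δ ε : ℝ) (htk : 0 ≤ tk) (hδ : 0 < δ) (hε : 0 < ε)
    (hactive : ε ≤ ‖gx xk tk‖) :
    |f (xk - (δ * |ft xk tk| / ‖gx xk tk‖ ^ 2) • gx xk tk) (tk + δ) - f xk tk|
      ≤ (2 * K1 / δ + M / (2 * ε ^ 2) * K1 ^ 2 + K3 / 2 + K1 * K2 / ε) * δ ^ 2 := by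
  set g0 := gx xk tk with hg0
  set a := δ * |ft xk tk| / ‖g0‖ ^ 2 with ha_def
  set x' := xk - a • g0 with hx'
  set t' := tk + δ with ht'_def
  have ht' : 0 ≤ t' := by rw [ht'_def]; linarith
  have hg0pos : 0 < ‖g0‖ := lt_of_lt_of_le hε hactive
  have hg0ne : ‖g0‖ ≠ 0 := ne_of_gt hg0pos
  have hK1n : 0 ≤ K1 := le_trans (abs_nonneg _) (hK1 xk tk htk)
  have hK2n : 0 ≤ K2 := le_trans (norm_nonneg _) (hK2 xk tk htk)
  have hK3n : 0 ≤ K3 := le_trans (abs_nonneg _) (hK3 xk tk htk)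
  have hMpos : 0 < M := lt_of_lt_of_le hm hmM
  have ha : 0 ≤ a := by rw [ha_def]; positivity
  have hvneg : x' - xk = -(a • g0) := by rw [hx']; abel
  have hvnorm : ‖x' - xk‖ = δ * |ft xk tk| / ‖g0‖ := by
    rw [hvneg, norm_neg, norm_smul, Real.norm_eq_abs, abs_of_nonneg ha, ha_def]
    field_simp
  -- temporal bound on f
  have htemp : |f xk t' - f xk tk| ≤ K1 * δ := by
    have h := mv_bound (fun s => f xk s) (fun s => ft xk s) K1 tk δ htk hδ.le
      (fun t ht => hft xk t ht)
      (fun t ht => by simpa [Real.norm_eq_abs] using hK1 xk t ht)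
    rw [← ht'_def] at h
    simpa [Real.norm_eq_abs] using h
  -- temporal bound on gradient
  have hgt : ‖gx xk t' - g0‖ ≤ K2 * δ := by
    have h := mv_bound (fun s => gx xk s) (fun s => fxt xk s) K2 tk δ htk hδ.le
      (fun t ht => hfxt xk t ht) (fun t ht => hK2 xk t ht)
    rw [← ht'_def] at h
    exact h
  -- descent lemma at time t'
  have hdesc : |f x' t' - f xk t' - ⟪gx xk t', x' - xk⟫| ≤ M / 2 * ‖x' - xk‖ ^ 2 :=
    descent_lemma (fun z => f z t') (fun z => gx z t') M hMpos.le
      (fun z => hgrad z t' ht') (fun z w => hLip t' ht' z w) xk x'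
  have hinner1 : |⟪g0, x' - xk⟫| ≤ δ * K1 := by
    have he : ⟪g0, x' - xk⟫ = -(δ * |ft xk tk|) := by
      rw [hvneg, inner_neg_right, real_inner_smul_right, real_inner_self_eq_norm_sq,
        ha_def]
      field_simp
    rw [he, abs_neg, abs_of_nonneg (by positivity)]
    have := hK1 xk tk htk
    nlinarith
  have hvle : ‖x' - xk‖ ≤ δ * K1 / ε := by
    rw [hvnorm]
    apply div_le_div₀ (by positivity) (by nlinarith [hK1 xk tk htk]) hε hactive
  have hinner2 : |⟪gx xk t' - g0, x' - xk⟫| ≤ K2 * δ * (δ * K1 / ε) := by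
    calc |⟪gx xk t' - g0, x' - xk⟫| ≤ ‖gx xk t' - g0‖ * ‖x' - xk‖ :=
          abs_real_inner_le_norm _ _
      _ ≤ K2 * δ * (δ * K1 / ε) := by
          apply mul_le_mul hgt hvle (norm_nonneg _) (by positivity)
  have hsq : M / 2 * ‖x' - xk‖ ^ 2 ≤ M / 2 * (δ * K1 / ε) ^ 2 := by
    have := norm_nonneg (x' - xk)
    gcongr
  have hspace : |f x' t' - f xk t'| ≤ δ * K1 + K2 * δ * (δ * K1 / ε)
      + M / 2 * (δ * K1 / ε) ^ 2 := by
    have hsplit : ⟪gx xk t', x' - xk⟫ = ⟪g0, x' - xk⟫ + ⟪gx xk t' - g0, x' - xk⟫ := by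
      rw [inner_sub_left]; ring
    have htri : |f x' t' - f xk t'| ≤ |f x' t' - f xk t' - ⟪gx xk t', x' - xk⟫|
        + |⟪gx xk t', x' - xk⟫| := by
      have h := abs_add_le (f x' t' - f xk t' - ⟪gx xk t', x' - xk⟫) ⟪gx xk t', x' - xk⟫
      simpa using h
    have htri2 : |⟪gx xk t', x' - xk⟫| ≤ |⟪g0, x' - xk⟫| + |⟪gx xk t' - g0, x' - xk⟫| := by
      rw [hsplit]; exact abs_add_le _ _
    linarith
  have hfinal : (2 * K1 / δ + M / (2 * ε ^ 2) * K1 ^ 2 + K3 / 2 + K1 * K2 / ε) * δ ^ 2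
      = 2 * (K1 * δ) + M / 2 * (δ * K1 / ε) ^ 2 + K3 / 2 * δ ^ 2
        + K2 * δ * (δ * K1 / ε) := by
    field_simp
  have hK3sq : 0 ≤ K3 / 2 * δ ^ 2 := by positivity
  calc |f x' t' - f xk tk| ≤ |f x' t' - f xk t'| + |f xk t' - f xk tk| := by
        have := abs_add_le (f x' t' - f xk t') (f xk t' - f xk tk)
        simpa using this
    _ ≤ (2 * K1 / δ + M / (2 * ε ^ 2) * K1 ^ 2 + K3 / 2 + K1 * K2 / ε) * δ ^ 2 := by
        rw [hfinal]; linarith
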